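/- If there exists a matching of Q_n blocking all k-dimensional subcubes (i.e., every k-dimensional subcube contains an edge of the matching) with k ≥ n/3 + 1, then there exists a matching of Q_{4n} blocking all (4k-3)-dimensional subcubes. -/
import Mathlib


def QAdj {n : ℕ} (x y : Fin n → Bool) : Prop :=
  (Finset.univ.filter (fun i => x i ≠ y i)).card = 1

def QEdge (n : ℕ) (e : Set (Fin n → Bool)) : Prop :=
  ∃ x y, QAdj x y ∧ e = {x, y}

def IsSubcube (n k : ℕ) (S : Set (Fin n → Bool)) : Prop :=
  ∃ (F : Finset (Fin n)) (b : Fin n → Bool),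
    F.card = n - k ∧ S = {x | ∀ i ∈ F, x i = b i}

def IsMatching (n : ℕ) (M : Set (Set (Fin n → Bool))) : Prop :=
  (∀ e ∈ M, QEdge n e) ∧ ∀ e ∈ M, ∀ f ∈ M, e ≠ f → e ∩ f = ∅

def Blocks (n k : ℕ) (M : Set (Set (Fin n → Bool))) : Prop :=
  ∀ S, IsSubcube n k S → ∃ e ∈ M, e ⊆ S

def parity {n : ℕ} (x : Fin n → Bool) : ℕ :=
  (Finset.univ.filter (fun i => x i = true)).card % 2

namespace Stmt9

/-! ### Basic facts about `QAdj` -/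

lemma qadj_iff {n : ℕ} {x y : Fin n → Bool} :
    QAdj x y ↔ ∃ c, x c ≠ y c ∧ ∀ i, i ≠ c → x i = y i := by
  constructor
  · intro h
    obtain ⟨c, hc⟩ := Finset.card_eq_one.mp h
    refine ⟨c, ?_, ?_⟩
    · have : c ∈ Finset.univ.filter (fun i => x i ≠ y i) := by rw [hc]; simp
      simpa using this
    · intro i hi
      by_contra hne
      have : i ∈ Finset.univ.filter (fun i => x i ≠ y i) := by simp [hne]
      rw [hc] at this
      simp at this
      exact hi this
  · rintro ⟨c, hc, hall⟩
    have : Finset.univ.filter (fun i => x i ≠ y i) = {c} := by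
      ext i
      simp only [Finset.mem_filter, Finset.mem_univ, true_and, Finset.mem_singleton]
      constructor
      · intro hne
        by_contra hic
        exact hne (hall i hic)
      · intro hic; subst hic; exact hc
    rw [QAdj, this, Finset.card_singleton]

lemma QAdj.ne' {n : ℕ} {x y : Fin n → Bool} (h : QAdj x y) : x ≠ y := by
  obtain ⟨c, hc, -⟩ := qadj_iff.mp h
  intro he; exact hc (by rw [he])

lemma QAdj.symm' {n : ℕ} {x y : Fin n → Bool} (h : QAdj x y) : QAdj y x := by
  obtain ⟨c, hc, hall⟩ := qadj_iff.mp h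
  exact qadj_iff.mpr ⟨c, Ne.symm hc, fun i hi => (hall i hi).symm⟩

/-! ### Parity -/

def parB {m : ℕ} (y : Fin m → Bool) : Bool :=
  decide ((Finset.univ.filter (fun i => y i = true)).card % 2 = 1)

lemma parB_update {m : ℕ} (y : Fin m → Bool) (r : Fin m) (w : Bool) (h : w ≠ y r) :
    parB (Function.update y r w) = !parB y := by
  have key : (Finset.univ.filter (fun i => Function.update y r w i = true)).card % 2 = 1
      ↔ ¬ ((Finset.univ.filter (fun i => y i = true)).card % 2 = 1) := by
    rcases Bool.eq_false_or_eq_true w with hw | hw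
    · subst hw
      have hyr : y r = false := by
        cases hyr : y r
        · rfl
        · exact absurd hyr.symm (by simpa using h)
      have hset : (Finset.univ.filter (fun i => Function.update y r true i = true))
          = insert r (Finset.univ.filter (fun i => y i = true)) := by
        ext i
        simp only [Finset.mem_filter, Finset.mem_univ, true_and, Finset.mem_insert]
        by_cases hir : i = r
        · subst hir; simp [Function.update_self]
        · simp [Function.update_of_ne hir, hir]
      have hmem : r ∉ Finset.univ.filter (fun i => y i = true) := by simp [hyr]
      rw [hset, Finset.card_insert_of_notMem hmem]
      omega
    · subst hw
      have hyr : y r = true := by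
        cases hyr : y r
        · exact absurd hyr.symm (by simpa using h)
        · rfl
      have hset : (Finset.univ.filter (fun i => Function.update y r false i = true))
          = (Finset.univ.filter (fun i => y i = true)).erase r := by
        ext i
        simp only [Finset.mem_filter, Finset.mem_univ, true_and, Finset.mem_erase]
        by_cases hir : i = r
        · subst hir; simp [Function.update_self]
        · simp [Function.update_of_ne hir, hir]
      have hmem : r ∈ Finset.univ.filter (fun i => y i = true) := by simp [hyr]
      rw [hset, Finset.card_erase_of_mem hmem]
      have hpos : 1 ≤ (Finset.univ.filter (fun i => y i = true)).card :=
        Finset.card_pos.mpr ⟨r, hmem⟩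
      omega
  rw [parB, parB, decide_eq_decide.mpr key, decide_not]

lemma parB_adj {m : ℕ} {u v : Fin m → Bool} (h : QAdj u v) : parB v = !parB u := by
  obtain ⟨c, hc, hall⟩ := qadj_iff.mp h
  have hv : v = Function.update u c (v c) := by
    funext i
    by_cases hic : i = c
    · subst hic; simp
    · rw [Function.update_of_ne hic]; exact (hall i hic).symm
  rw [hv]
  exact parB_update u c (v c) (fun he => hc he.symm)

lemma exists_parB {n : ℕ} (F' : Finset (Fin n)) (h : F'.card < n) (β : Fin n → Bool)
    (w : Bool) : ∃ z, (∀ r ∈ F', z r = β r) ∧ parB z = w := by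
  classical
  set z0 : Fin n → Bool := fun r => if r ∈ F' then β r else false with hz0def
  have hz0 : ∀ r ∈ F', z0 r = β r := fun r hr => by simp [hz0def, hr]
  have hne : ∃ r0, r0 ∉ F' := by
    by_contra hall
    push_neg at hall
    have : F' = Finset.univ := Finset.eq_univ_iff_forall.mpr hall
    rw [this, Finset.card_univ] at h
    simp at h
  obtain ⟨r0, hr0⟩ := hne
  by_cases hw : parB z0 = w
  · exact ⟨z0, hz0, hw⟩
  · refine ⟨Function.update z0 r0 (!z0 r0), ?_, ?_⟩
    · intro r hr
      rw [Function.update_of_ne (fun he => hr0 (by rw [← he]; exact hr))]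
      exact hz0 r hr
    · rw [parB_update _ _ _ (by cases z0 r0 <;> simp)]
      cases hpz : parB z0 <;> cases hw' : w <;> simp_all

/-! ### The selector on the pattern cube -/

def D4 (p : Fin 4 → Bool) : Fin 4 :=
  match p 0, p 1, p 2, p 3 with
  | false, false, false, false => 0
  | true , false, false, false => 0
  | false, true , true , true  => 0
  | true , true , true , true  => 0
  | false, false, true , false => 1
  | false, true , true , false => 1
  | true , false, false, true  => 1
  | true , true , false, true  => 1
  | false, false, false, true  => 2
  | false, false, true , true  => 2
  | true , true , false, false => 2
  | true , true , true , false => 2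
  | false, true , false, false => 3
  | false, true , false, true  => 3
  | true , false, true , false => 3
  | true , false, true , true  => 3

lemma D4_update : ∀ (p : Fin 4 → Bool) (v : Bool),
    D4 (Function.update p (D4 p) v) = D4 p := by decide

lemma D4_L1 : ∀ (d j : Fin 4), j ≠ d → ∀ v : Bool,
    ∃ p : Fin 4 → Bool, D4 p = d ∧ p j = v := by decide

lemma D4_L2 : ∀ (d d' j l : Fin 4), d ≠ d' → d ≠ j → d ≠ l → d' ≠ j → d' ≠ l → j ≠ l →
    ∀ vj vl : Bool, ∃ p : Fin 4 → Bool, (D4 p = d ∨ D4 p = d') ∧ p j = vj ∧ p l = vl := by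
  decide

lemma fin4_two_others : ∀ j l : Fin 4, j ≠ l →
    ∃ d d', d ≠ d' ∧ d ≠ j ∧ d ≠ l ∧ d' ≠ j ∧ d' ≠ l := by decide

lemma fin4_cover : ∀ d d' j l t : Fin 4, d ≠ d' → d ≠ j → d ≠ l → d' ≠ j → d' ≠ l → j ≠ l →
    (t = d ∨ t = d' ∨ t = j ∨ t = l) := by decide

lemma fin4_succ_ne : ∀ d : Fin 4, d + 1 ≠ d := by decide

/-! ### Block structure of `Q_{4n}` -/

def blkE (n : ℕ) : Fin 4 × Fin n ≃ Fin (4 * n) := finProdFinEquiv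

def cmp4 {n : ℕ} (x : Fin (4 * n) → Bool) (j : Fin 4) : Fin n → Bool :=
  fun r => x (blkE n (j, r))

def pat4 {n : ℕ} (x : Fin (4 * n) → Bool) : Fin 4 → Bool := fun j => parB (cmp4 x j)

def rep4 {n : ℕ} (x : Fin (4 * n) → Bool) (d : Fin 4) (z : Fin n → Bool) :
    Fin (4 * n) → Bool :=
  fun i => if ((blkE n).symm i).1 = d then z ((blkE n).symm i).2 else x i

lemma cmp4_rep4 {n : ℕ} (x : Fin (4 * n) → Bool) (d : Fin 4) (z : Fin n → Bool) (j : Fin 4) :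
    cmp4 (rep4 x d z) j = if j = d then z else cmp4 x j := by
  funext r
  simp only [cmp4, rep4, Equiv.symm_apply_apply]
  by_cases hjd : j = d
  · simp [hjd]
  · simp only [hjd, if_false]
    rfl

lemma rep4_self {n : ℕ} (x : Fin (4 * n) → Bool) (d : Fin 4) :
    rep4 x d (cmp4 x d) = x := by
  funext i
  simp only [rep4, cmp4]
  by_cases hd : ((blkE n).symm i).1 = d
  · rw [if_pos hd]
    have : (blkE n) (d, ((blkE n).symm i).2) = i := by
      conv_rhs => rw [← Equiv.apply_symm_apply (blkE n) i]
      congr 1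
      exact Prod.ext hd.symm rfl
    rw [this]
  · rw [if_neg hd]

lemma rep4_rep4 {n : ℕ} (x : Fin (4 * n) → Bool) (d : Fin 4) (z z' : Fin n → Bool) :
    rep4 (rep4 x d z) d z' = rep4 x d z' := by
  funext i
  simp only [rep4]
  by_cases hd : ((blkE n).symm i).1 = d <;> simp [hd]

lemma pat4_rep4 {n : ℕ} (x : Fin (4 * n) → Bool) (d : Fin 4) (z : Fin n → Bool) :
    pat4 (rep4 x d z) = Function.update (pat4 x) d (parB z) := by
  funext j
  simp only [pat4, cmp4_rep4]
  by_cases hjd : j = d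
  · subst hjd; simp
  · rw [if_neg hjd, Function.update_of_ne hjd]
    rfl

lemma qadj_rep4 {n : ℕ} {u v : Fin n → Bool} (h : QAdj u v)
    (x : Fin (4 * n) → Bool) (d : Fin 4) (hx : cmp4 x d = u) :
    QAdj x (rep4 x d v) := by
  obtain ⟨c, hc, hall⟩ := qadj_iff.mp h
  refine qadj_iff.mpr ⟨blkE n (d, c), ?_, ?_⟩
  · simp only [rep4, Equiv.symm_apply_apply, if_pos rfl]
    have : x (blkE n (d, c)) = u c := by rw [← hx]; rfl
    rw [this]; exact hc
  · intro i hi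
    simp only [rep4]
    by_cases hd : ((blkE n).symm i).1 = d
    · rw [if_pos hd]
      have hir : i = blkE n (d, ((blkE n).symm i).2) := by
        conv_lhs => rw [← Equiv.apply_symm_apply (blkE n) i]
        congr 1
        exact Prod.ext hd rfl
      have hrc : ((blkE n).symm i).2 ≠ c := by
        intro he
        apply hi
        rw [hir, he]
      have hxu : x i = u ((blkE n).symm i).2 := by
        rw [← hx]
        conv_lhs => rw [hir]
        simp [cmp4]
      rw [hxu]
      exact hall _ hrc
    · rw [if_neg hd]

lemma card_partition {n : ℕ} (F : Finset (Fin (4 * n))) :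
    ∑ j : Fin 4, (Finset.univ.filter (fun r : Fin n => blkE n (j, r) ∈ F)).card = F.card := by
  rw [Finset.card_eq_sum_card_fiberwise
    (f := fun i => ((blkE n).symm i).1) (t := Finset.univ) (fun x _ => Finset.mem_univ _)]
  apply Finset.sum_congr rfl
  intro j _
  symm
  apply Finset.card_bij' (fun i _ => ((blkE n).symm i).2) (fun r _ => blkE n (j, r))
  · intro i hi
    simp only [Finset.mem_filter] at hi ⊢
    obtain ⟨hiF, hij⟩ := hi
    refine ⟨Finset.mem_univ _, ?_⟩
    have : (blkE n) (j, ((blkE n).symm i).2) = i := by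
      conv_rhs => rw [← Equiv.apply_symm_apply (blkE n) i]
      congr 1
      exact Prod.ext hij.symm rfl
    rw [this]; exact hiF
  · intro r hr
    simp only [Finset.mem_filter, Finset.mem_univ, true_and] at hr ⊢
    exact ⟨hr, by simp⟩
  · intro i hi
    simp only [Finset.mem_filter] at hi
    conv_rhs => rw [← Equiv.apply_symm_apply (blkE n) i]
    congr 1
    exact Prod.ext hi.2.symm rfl
  · intro r hr; simp

lemma blkE_eta {n : ℕ} (i : Fin (4 * n)) :
    blkE n (((blkE n).symm i).1, ((blkE n).symm i).2) = i :=
  Equiv.apply_symm_apply (blkE n) i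

/-! ### Matching helpers -/

lemma mem_matching_pair {n : ℕ} {M : Set (Set (Fin n → Bool))} (hM : IsMatching n M)
    {u w : Fin n → Bool} (h : ({u, w} : Set (Fin n → Bool)) ∈ M) : QAdj u w := by
  obtain ⟨a, b, hab, he⟩ := hM.1 _ h
  have hane : a ≠ b := QAdj.ne' hab
  have hu : u = a ∨ u = b := by
    have : u ∈ ({a, b} : Set (Fin n → Bool)) := he ▸ (by simp : u ∈ ({u, w} : Set _))
    simpa using this
  have hw : w = a ∨ w = b := by
    have : w ∈ ({a, b} : Set (Fin n → Bool)) := he ▸ (by simp : w ∈ ({u, w} : Set _))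
    simpa using this
  have hb' : b = u ∨ b = w := by
    have : b ∈ ({u, w} : Set (Fin n → Bool)) := by rw [he]; simp
    simpa using this
  have ha' : a = u ∨ a = w := by
    have : a ∈ ({u, w} : Set (Fin n → Bool)) := by rw [he]; simp
    simpa using this
  rcases hu with h1 | h1 <;> rcases hw with h2 | h2
  · exfalso
    rcases hb' with h3 | h3
    · exact hane (h3.trans h1).symm
    · exact hane (h3.trans h2).symm
  · subst h1; subst h2; exact hab
  · subst h1; subst h2; exact QAdj.symm' hab
  · exfalso
    rcases ha' with h3 | h3
    · exact hane (h3.trans h1)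
    · exact hane (h3.trans h2)

lemma partner_unique {n : ℕ} {M : Set (Set (Fin n → Bool))} (hM : IsMatching n M)
    {u v v' : Fin n → Bool} (h1 : ({u, v} : Set (Fin n → Bool)) ∈ M)
    (h2 : ({u, v'} : Set (Fin n → Bool)) ∈ M) : v = v' := by
  have hne1 : u ≠ v := QAdj.ne' (mem_matching_pair hM h1)
  have heq : ({u, v} : Set (Fin n → Bool)) = {u, v'} := by
    by_contra hne
    have hdisj := hM.2 _ h1 _ h2 hne
    have hu : u ∈ ({u, v} : Set (Fin n → Bool)) ∩ {u, v'} := ⟨by simp, by simp⟩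
    rw [hdisj] at hu
    exact hu
  have hv : v ∈ ({u, v'} : Set (Fin n → Bool)) :=
    heq ▸ (by simp : v ∈ ({u, v} : Set (Fin n → Bool)))
  simp only [Set.mem_insert_iff, Set.mem_singleton_iff] at hv
  rcases hv with h | h
  · exact absurd h.symm hne1
  · exact h

end Stmt9

open Stmt9

theorem stmt_9 (n k : ℕ) (hk : (k : ℚ) ≥ (n : ℚ) / 3 + 1)
    (h : ∃ M, IsMatching n M ∧ Blocks n k M) :
    ∃ M', IsMatching (4 * n) M' ∧ Blocks (4 * n) (4 * k - 3) M' := by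
  classical
  obtain ⟨M, hM, hB⟩ := h
  have hk3 : n + 3 ≤ 3 * k := by
    have h3 : (n : ℚ) + 3 ≤ 3 * k := by
      have := hk
      linarith
    exact_mod_cast h3
  rcases Nat.eq_zero_or_pos n with hn0 | hn
  · exfalso
    subst hn0
    have hsub : IsSubcube 0 k Set.univ :=
      ⟨∅, fun _ => false, by simp, by ext x; simp⟩
    obtain ⟨e, heM, -⟩ := hB _ hsub
    obtain ⟨x, y, hxy, -⟩ := hM.1 _ heM
    have hle : (Finset.univ.filter (fun i => x i ≠ y i)).card ≤ 0 := by
      calc (Finset.univ.filter (fun i => x i ≠ y i)).card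
          ≤ (Finset.univ : Finset (Fin 0)).card := Finset.card_filter_le _ _
        _ = 0 := by simp
    rw [QAdj] at hxy
    omega
  rcases lt_or_ge n k with hnk | hkn
  · -- degenerate case `n < k` : every (4k-3)-subcube of Q_{4n} is the whole cube
    have hsubn : IsSubcube n k Set.univ :=
      ⟨∅, fun _ => false, by simp [Nat.sub_eq_zero_of_le hnk.le], by ext x; simp⟩
    obtain ⟨e0, he0M, -⟩ := hB _ hsubn
    obtain ⟨a, b, hab, he0⟩ := hM.1 _ he0M
    set X : Fin (4 * n) → Bool :=
      fun i => if ((blkE n).symm i).1 = 0 then a (((blkE n).symm i).2) else false with hX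
    have hcmpX : cmp4 X 0 = a := by
      funext r
      simp [cmp4, hX, Equiv.symm_apply_apply]
    have hadjX : QAdj X (rep4 X 0 b) := qadj_rep4 hab X 0 hcmpX
    refine ⟨{{X, rep4 X 0 b}}, ⟨?_, ?_⟩, ?_⟩
    · rintro e he
      rw [Set.mem_singleton_iff] at he
      subst he
      exact ⟨X, _, hadjX, rfl⟩
    · rintro e he f hf hne
      rw [Set.mem_singleton_iff] at he hf
      exact absurd (he.trans hf.symm) hne
    · rintro S ⟨F, bb, hFcard, hSdef⟩
      have hF0 : F.card = 0 := by omega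
      have hFe : F = ∅ := Finset.card_eq_zero.mp hF0
      refine ⟨{X, rep4 X 0 b}, rfl, ?_⟩
      intro z _
      rw [hSdef]
      intro i hi
      rw [hFe] at hi
      simp at hi
  · -- main case `k ≤ n`
    set M' : Set (Set (Fin (4 * n) → Bool)) :=
      {E | ∃ x v, ({cmp4 x (D4 (pat4 x)), v} : Set (Fin n → Bool)) ∈ M ∧
        E = {x, rep4 x (D4 (pat4 x)) v}} with hM'def
    have hcanon : ∀ E ∈ M', ∀ z ∈ E, ∃ w,
        ({cmp4 z (D4 (pat4 z)), w} : Set (Fin n → Bool)) ∈ M ∧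
        E = {z, rep4 z (D4 (pat4 z)) w} := by
      rintro E ⟨x, v, hxv, rfl⟩ z hz
      simp only [Set.mem_insert_iff, Set.mem_singleton_iff] at hz
      rcases hz with rfl | rfl
      · exact ⟨v, hxv, rfl⟩
      · have hcmp : cmp4 (rep4 x (D4 (pat4 x)) v) (D4 (pat4 x)) = v := by
          rw [cmp4_rep4]; simp
        have hD : D4 (pat4 (rep4 x (D4 (pat4 x)) v)) = D4 (pat4 x) := by
          rw [pat4_rep4]
          exact D4_update (pat4 x) (parB v)
        refine ⟨cmp4 x (D4 (pat4 x)), ?_, ?_⟩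
        · rw [hD, hcmp, Set.pair_comm]
          exact hxv
        · rw [hD, rep4_rep4, rep4_self, Set.pair_comm]
    have hmatch : IsMatching (4 * n) M' := by
      constructor
      · rintro E ⟨x, v, hxv, rfl⟩
        have hadj : QAdj (cmp4 x (D4 (pat4 x))) v := mem_matching_pair hM hxv
        exact ⟨x, _, qadj_rep4 hadj x _ rfl, rfl⟩
      · rintro e he f hf hne
        rw [Set.eq_empty_iff_forall_notMem]
        rintro z ⟨hze, hzf⟩
        obtain ⟨w1, hw1, he1⟩ := hcanon e he z hze
        obtain ⟨w2, hw2, hf1⟩ := hcanon f hf z hzf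
        have hw12 : w1 = w2 := partner_unique hM hw1 hw2
        exact hne (by rw [he1, hf1, hw12])
    refine ⟨M', hmatch, ?_⟩
    rintro S ⟨F, b, hFcard, rfl⟩
    set Fj : Fin 4 → Finset (Fin n) :=
      fun j => Finset.univ.filter (fun r => blkE n (j, r) ∈ F) with hFjdef
    have hsum : ∑ j : Fin 4, (Fj j).card = F.card := card_partition F
    have hsum4 : (Fj 0).card + (Fj 1).card + (Fj 2).card + (Fj 3).card = F.card := by
      rw [← hsum, Fin.sum_univ_four]
    have hcard2 : F.card + 4 * k = 4 * n + 3 := by omega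
    have hFle : ∀ j, (Fj j).card ≤ n := by
      intro j
      calc (Fj j).card ≤ (Finset.univ : Finset (Fin n)).card := Finset.card_filter_le _ _
        _ = n := by simp
    set pt : Fin 4 → (Fin n → Bool) := fun j r => b (blkE n (j, r)) with hptdef
    have claim : ∃ (d : Fin 4) (P : Fin 4 → Bool), D4 P = d ∧ (Fj d).card + k ≤ n ∧
        ∀ j, j ≠ d → (Fj j).card = n → P j = parB (pt j) := by
      by_cases hA : ∃ j l, j ≠ l ∧ (Fj j).card = n ∧ (Fj l).card = n
      · obtain ⟨j, l, hjl, hjn, hln⟩ := hA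
        obtain ⟨d, d', h1, h2, h3, h4, h5⟩ := fin4_two_others j l hjl
        have hsumle : (Fj d).card + ((Fj d').card + ((Fj j).card + (Fj l).card)) ≤ F.card := by
          have hsub : ({d, d', j, l} : Finset (Fin 4)) ⊆ Finset.univ := Finset.subset_univ _
          have hle := Finset.sum_le_sum_of_subset (f := fun t => (Fj t).card) hsub
          rw [hsum] at hle
          calc (Fj d).card + ((Fj d').card + ((Fj j).card + (Fj l).card))
              = ∑ t ∈ ({d, d', j, l} : Finset (Fin 4)), (Fj t).card := by
                rw [Finset.sum_insert (by simp [h1, h2, h3]),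
                  Finset.sum_insert (by simp [h4, h5]),
                  Finset.sum_insert (by simp [hjl]), Finset.sum_singleton]
            _ ≤ F.card := hle
        obtain ⟨p, hp, hpj, hpl⟩ := D4_L2 d d' j l h1 h2 h3 h4 h5 hjl (parB (pt j)) (parB (pt l))
        have hdk : (Fj d).card + k ≤ n := by omega
        have hd'k : (Fj d').card + k ≤ n := by omega
        rcases hp with hp | hp
        · refine ⟨d, p, hp, hdk, ?_⟩
          intro t htd htn
          rcases fin4_cover d d' j l t h1 h2 h3 h4 h5 hjl with rfl | rfl | rfl | rfl
          · exact absurd rfl htd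
          · omega
          · exact hpj
          · exact hpl
        · refine ⟨d', p, hp, hd'k, ?_⟩
          intro t htd htn
          rcases fin4_cover d d' j l t h1 h2 h3 h4 h5 hjl with rfl | rfl | rfl | rfl
          · omega
          · exact absurd rfl htd
          · exact hpj
          · exact hpl
      · push_neg at hA
        have hgood : ∃ d : Fin 4, (Fj d).card + k ≤ n := by
          by_contra hbad
          push_neg at hbad
          have hb0 := hbad 0
          have hb1 := hbad 1
          have hb2 := hbad 2
          have hb3 := hbad 3
          omega
        obtain ⟨d, hd⟩ := hgood
        by_cases hf : ∃ j, j ≠ d ∧ (Fj j).card = n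
        · obtain ⟨j, hjd, hjn⟩ := hf
          obtain ⟨p, hp, hpj⟩ := D4_L1 d j hjd (parB (pt j))
          refine ⟨d, p, hp, hd, ?_⟩
          intro t htd htn
          have htj : t = j := by
            by_contra htj
            exact hA t j htj htn hjn
          subst htj
          exact hpj
        · push_neg at hf
          obtain ⟨p, hp, -⟩ := D4_L1 d (d + 1) (fin4_succ_ne d) true
          refine ⟨d, p, hp, hd, ?_⟩
          intro t htd htn
          exact absurd htn (hf t htd)
    obtain ⟨d, P, hDP, hdk, hPforced⟩ := claim
    obtain ⟨G, hFG, hGcard⟩ :=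
      Finset.exists_superset_card_eq (s := Fj d) (n := n - k) (by omega) (by simp)
    have hsubT : IsSubcube n k {y : Fin n → Bool | ∀ r ∈ G, y r = pt d r} :=
      ⟨G, pt d, hGcard, rfl⟩
    obtain ⟨eT, heTM, heTsub⟩ := hB _ hsubT
    obtain ⟨a1, a2, ha12, heT⟩ := hM.1 _ heTM
    have hpar : parB a2 = !parB a1 := parB_adj ha12
    set y : Fin n → Bool := if parB a1 = P d then a1 else a2 with hydef
    set v : Fin n → Bool := if parB a1 = P d then a2 else a1 with hvdef
    have hyv : ({y, v} : Set (Fin n → Bool)) ∈ M := by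
      by_cases hc : parB a1 = P d
      · rw [hydef, hvdef, if_pos hc, if_pos hc, ← heT]
        exact heTM
      · rw [hydef, hvdef, if_neg hc, if_neg hc, Set.pair_comm, ← heT]
        exact heTM
    have hypar : parB y = P d := by
      by_cases hc : parB a1 = P d
      · rw [hydef, if_pos hc]; exact hc
      · rw [hydef, if_neg hc, hpar]
        cases hb1 : parB a1 <;> cases hb2 : P d <;> simp_all
    have hymem : y ∈ eT := by
      rw [heT]
      by_cases hc : parB a1 = P d
      · rw [hydef, if_pos hc]; simp
      · rw [hydef, if_neg hc]; simp
    have hvmem : v ∈ eT := by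
      rw [heT]
      by_cases hc : parB a1 = P d
      · rw [hvdef, if_pos hc]; simp
      · rw [hvdef, if_neg hc]; simp
    have hyT : ∀ r ∈ G, y r = pt d r := fun r hr => heTsub hymem r hr
    have hvT : ∀ r ∈ G, v r = pt d r := fun r hr => heTsub hvmem r hr
    have hzex : ∀ j : Fin 4, ∃ z : Fin n → Bool,
        (∀ r ∈ Fj j, z r = pt j r) ∧ parB z = P j ∧ (j = d → z = y) := by
      intro j
      by_cases hjd : j = d
      · subst hjd
        exact ⟨y, fun r hr => hyT r (hFG hr), hypar, fun _ => rfl⟩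
      · by_cases hforced : (Fj j).card = n
        · refine ⟨pt j, fun r _ => rfl, ?_, fun he => absurd he hjd⟩
          rw [hPforced j hjd hforced]
        · have hlt : (Fj j).card < n := lt_of_le_of_ne (hFle j) hforced
          obtain ⟨z, hz1, hz2⟩ := exists_parB (Fj j) hlt (pt j) (P j)
          exact ⟨z, hz1, hz2, fun he => absurd he hjd⟩
    choose z hz1 hz2 hz3 using hzex
    set x : Fin (4 * n) → Bool :=
      fun i => z ((blkE n).symm i).1 ((blkE n).symm i).2 with hxdef
    have hcmpx : ∀ j, cmp4 x j = z j := by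
      intro j
      funext r
      simp [cmp4, hxdef, Equiv.symm_apply_apply]
    have hpatx : pat4 x = P := by
      funext j
      show parB (cmp4 x j) = P j
      rw [hcmpx j, hz2 j]
    have hDx : D4 (pat4 x) = d := by rw [hpatx, hDP]
    have hcmpd : cmp4 x d = y := by rw [hcmpx d, hz3 d rfl]
    have hmemF : ∀ i ∈ F, ((blkE n).symm i).2 ∈ Fj ((blkE n).symm i).1 := by
      intro i hi
      simp only [hFjdef, Finset.mem_filter, Finset.mem_univ, true_and]
      rw [blkE_eta]
      exact hi
    refine ⟨{x, rep4 x (D4 (pat4 x)) v}, ⟨x, v, by rw [hDx, hcmpd]; exact hyv, rfl⟩, ?_⟩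
    intro w hw
    simp only [Set.mem_insert_iff, Set.mem_singleton_iff] at hw
    have hxS : ∀ i ∈ F, x i = b i := by
      intro i hi
      have hir := hmemF i hi
      have hzv := hz1 _ _ hir
      calc x i = z ((blkE n).symm i).1 ((blkE n).symm i).2 := rfl
        _ = pt ((blkE n).symm i).1 ((blkE n).symm i).2 := hzv
        _ = b (blkE n (((blkE n).symm i).1, ((blkE n).symm i).2)) := rfl
        _ = b i := by rw [blkE_eta]
    rcases hw with rfl | rfl
    · exact hxS
    · intro i hi
      rw [hDx]
      show rep4 x d v i = b i
      by_cases hdd : ((blkE n).symm i).1 = d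
      · rw [rep4, if_pos hdd]
        have hir := hmemF i hi
        rw [hdd] at hir
        have hGmem : ((blkE n).symm i).2 ∈ G := hFG hir
        calc v ((blkE n).symm i).2 = pt d ((blkE n).symm i).2 := hvT _ hGmem
          _ = b (blkE n (d, ((blkE n).symm i).2)) := rfl
          _ = b i := by rw [← hdd, blkE_eta]
      · rw [rep4, if_neg hdd]
        exact hxS i hi
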